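/- Suppose q = 0, suppose that any two distinct edges share at most one endpoint (i.e. for e ≠ e', the sets {s(e), t(e)} and {s(e'), t(e')} intersect in at most one node), and let O be any orientation. Then the Invariant Edge Laplacian is the entrywise absolute value of the Equivariant Edge Laplacian: for all edges e, e', [(B_inv)ᴴ · B_inv]_{e,e'} = | [(B_equ(O))ᴴ · B_equ(O)]_{e,e'} |. -/

import Mathlib

open Matrix

/-- `O` assigns to each edge either its endpoint pair `(s e, t e)` or the reversed pair. -/
def IsOrientation {V E : Type*} (s t : E → V) (O : E → V × V) : Prop :=
  ∀ e, O e = (s e, t e) ∨ O e = (t e, s e)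

/-- A direction-consistent orientation: an orientation which agrees with the direction
`(s e, t e)` on every directed edge. -/
def DirConsistent {V E : Type*} (s t : E → V) (dir : E → Bool) (O : E → V × V) : Prop :=
  IsOrientation s t O ∧ ∀ e, dir e = true → O e = (s e, t e)

/-- The magnetic equivariant boundary operator. -/
noncomputable def Bequ {V E : Type*} [DecidableEq V] (q : ℝ) (s t : E → V) (dir : E → Bool)
    (O : E → V × V) : Matrix V E ℂ :=
  Matrix.of fun v e =>
    if dir e then
      if v = s e then -Complex.exp (Complex.I * (Real.pi * q : ℂ))
      else if v = t e then Complex.exp (-(Complex.I * (Real.pi * q : ℂ)))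
      else 0
    else
      if v = (O e).1 then -1
      else if v = (O e).2 then 1
      else 0

/-- The magnetic invariant boundary operator. -/
noncomputable def Binv {V E : Type*} [DecidableEq V] (q : ℝ) (s t : E → V) (dir : E → Bool) :
    Matrix V E ℂ :=
  Matrix.of fun v e =>
    if dir e then
      if v = s e then Complex.exp (Complex.I * (Real.pi * q : ℂ))
      else if v = t e then Complex.exp (-(Complex.I * (Real.pi * q : ℂ)))
      else 0
    else
      if v = s e ∨ v = t e then 1 else 0

/-- The orientation-change matrix `Δ_{O,Ô}`. -/
noncomputable def Delta {V E : Type*} [DecidableEq V] [DecidableEq E] (O Ohat : E → V × V) :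
    Matrix E E ℂ :=
  Matrix.diagonal fun e => if O e = Ohat e then 1 else -1

/-- For `q = 0`, if any two distinct edges share at most one endpoint, the Invariant Edge
Laplacian is the entrywise absolute value of the Equivariant Edge Laplacian:
`[(B_inv)ᴴ B_inv]_{e,e'} = |[(B_equ(O))ᴴ B_equ(O)]_{e,e'}|`. -/

private lemma sum_two' {V : Type*} [Fintype V] [DecidableEq V] (p1 p2 : V) (h : p1 ≠ p2)
    (c1 c2 : ℂ) (g : V → ℂ) :
    ∑ v, (if v = p1 then c1 else if v = p2 then c2 else 0) * g v = c1 * g p1 + c2 * g p2 := by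
  have key : ∀ v, (if v = p1 then c1 else if v = p2 then c2 else 0) * g v
      = (if v = p1 then c1 * g p1 else 0) + (if v = p2 then c2 * g p2 else 0) := by
    intro v
    by_cases h1 : v = p1
    · subst h1; simp [h]
    · by_cases h2 : v = p2
      · subst h2; simp [h1]
      · simp [h1, h2]
  simp_rw [key]
  rw [Finset.sum_add_distrib, Finset.sum_ite_eq', Finset.sum_ite_eq']
  simp

theorem inv_laplacian_eq_abs_equ_laplacian
    {V E : Type*} [Fintype V] [Fintype E] [DecidableEq V] [DecidableEq E]
    (s t : E → V) (hst : ∀ e, s e ≠ t e) (dir : E → Bool)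
    (hshare : ∀ e e' : E, e ≠ e' →
      (({s e, t e} : Set V) ∩ ({s e', t e'} : Set V)).Subsingleton)
    (O : E → V × V) (hO : IsOrientation s t O) (e e' : E) :
    ((Binv 0 s t dir)ᴴ * Binv 0 s t dir) e e'
      = ((‖((Bequ 0 s t dir O)ᴴ * Bequ 0 s t dir O) e e'‖ : ℝ) : ℂ) := by
  classical
  set P : E → V × V := fun a => if dir a then (s a, t a) else O a with hPdef
  have hP : ∀ a, P a = (s a, t a) ∨ P a = (t a, s a) := by
    intro a
    by_cases h : dir a
    · left; simp [hPdef, h]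
    · simp only [hPdef, h]; simpa using hO a
  have hp12 : ∀ a, (P a).1 ≠ (P a).2 := by
    intro a
    rcases hP a with h | h <;> rw [h] <;> simp [hst a, (hst a).symm]
  have hBinv : ∀ (v : V) (a : E), Binv 0 s t dir v a
      = if v = (P a).1 then 1 else if v = (P a).2 then 1 else 0 := by
    intro v a
    by_cases h : dir a
    · simp only [Binv, Matrix.of_apply, h, if_true, hPdef]
      simp
    · simp only [Binv, Matrix.of_apply, h, if_false, hPdef, Bool.false_eq_true]
      have hpa : P a = O a := by simp [hPdef, h]
      rcases hO a with ho | ho <;>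
        · rw [ho] <;> by_cases h1 : v = s a <;> by_cases h2 : v = t a <;>
            simp [ho, h1, h2, hPdef, h]
  have hBequ : ∀ (v : V) (a : E), Bequ 0 s t dir O v a
      = if v = (P a).1 then -1 else if v = (P a).2 then 1 else 0 := by
    intro v a
    by_cases h : dir a
    · simp only [Bequ, Matrix.of_apply, h, if_true, hPdef]
      simp
    · simp [Bequ, hPdef, h]
  have habs : ∀ (v : V) (a : E), Binv 0 s t dir v a
      = ((‖Bequ 0 s t dir O v a‖ : ℝ) : ℂ) := by
    intro v a
    rw [hBinv, hBequ]
    rcases eq_or_ne v (P a).1 with h1 | h1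
    · simp [h1]
    · rcases eq_or_ne v (P a).2 with h2 | h2
      · simp [h1, h2, Ne.symm (hp12 a)]
      · simp [h1, h2]
  have hL : ((Binv 0 s t dir)ᴴ * Binv 0 s t dir) e e'
      = Binv 0 s t dir (P e).1 e' + Binv 0 s t dir (P e).2 e' := by
    rw [Matrix.mul_apply]
    have step : ∀ v, (Binv 0 s t dir)ᴴ e v * Binv 0 s t dir v e'
        = (if v = (P e).1 then (1:ℂ) else if v = (P e).2 then 1 else 0)
            * Binv 0 s t dir v e' := by
      intro v
      rw [Matrix.conjTranspose_apply, hBinv v e]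
      split_ifs <;> simp
    rw [Finset.sum_congr rfl fun v _ => step v, sum_two' _ _ (hp12 e)]
    ring
  have hE : ((Bequ 0 s t dir O)ᴴ * Bequ 0 s t dir O) e e'
      = (-1) * Bequ 0 s t dir O (P e).1 e' + Bequ 0 s t dir O (P e).2 e' := by
    rw [Matrix.mul_apply]
    have step : ∀ v, (Bequ 0 s t dir O)ᴴ e v * Bequ 0 s t dir O v e'
        = (if v = (P e).1 then (-1:ℂ) else if v = (P e).2 then 1 else 0)
            * Bequ 0 s t dir O v e' := by
      intro v
      rw [Matrix.conjTranspose_apply, hBequ v e]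
      split_ifs <;> simp
    rw [Finset.sum_congr rfl fun v _ => step v, sum_two' _ _ (hp12 e)]
    ring
  rw [hL, hE]
  by_cases hee : e = e'
  · subst hee
    rw [hBinv, hBinv, hBequ, hBequ]
    simp [hp12 e, (hp12 e).symm]
    norm_num
  · -- at most one of the two Bequ entries is nonzero
    have hmem1 : (P e).1 ∈ ({s e, t e} : Set V) := by
      rcases hP e with h | h <;> rw [h] <;> simp
    have hmem2 : (P e).2 ∈ ({s e, t e} : Set V) := by
      rcases hP e with h | h <;> rw [h] <;> simp
    have hne : ∀ v : V, Bequ 0 s t dir O v e' ≠ 0 → v ∈ ({s e', t e'} : Set V) := by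
      intro v hv
      rw [hBequ] at hv
      rcases hP e' with h | h <;>
        · by_cases h1 : v = (P e').1 <;> by_cases h2 : v = (P e').2 <;>
            simp [h1, h2] at hv ⊢ <;> simp [h1, h2, h] <;> tauto
    have hkey : Bequ 0 s t dir O (P e).1 e' = 0 ∨ Bequ 0 s t dir O (P e).2 e' = 0 := by
      by_contra hcon
      push_neg at hcon
      have m1 := hne _ hcon.1
      have m2 := hne _ hcon.2
      exact hp12 e (hshare e e' hee ⟨hmem1, m1⟩ ⟨hmem2, m2⟩)
    rw [habs, habs]
    rcases hkey with h0 | h0 <;> rw [h0] <;> simp
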